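/- For every η, ξ ∈ ℝ^N one has (1/2)·⟨a(|η|)η − a(|ξ|)ξ, η − ξ⟩ ≥ G(|η|) + G(|ξ|) − 2·G(|(η + ξ)/2|), where ⟨·,·⟩ is the Euclidean inner product on ℝ^N and a(|ζ|)ζ is interpreted as 0 when ζ = 0. -/

import Mathlib

open MeasureTheory

/-- For all `η, ξ ∈ ℝ^N`,
`(1/2)⟨a(|η|)η − a(|ξ|)ξ, η − ξ⟩ ≥ G(|η|) + G(|ξ|) − 2 G(|(η+ξ)/2|)`. -/
theorem stmt_12 (N : ℕ) (hN : 1 ≤ N)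
    (a g G : ℝ → ℝ)
    (hg_def : ∀ t : ℝ, g t = a |t| * t)
    (hg_odd : ∀ t : ℝ, g (-t) = - g t)
    (hg_mono : StrictMono g) (hg_surj : Function.Surjective g) (hg_cont : Continuous g)
    (hG : ∀ t : ℝ, G t = ∫ s in (0:ℝ)..t, g s)
    (A : EuclideanSpace ℝ (Fin N) → EuclideanSpace ℝ (Fin N))
    (hA0 : A 0 = 0)
    (hA : ∀ ζ : EuclideanSpace ℝ (Fin N), ζ ≠ 0 → A ζ = a ‖ζ‖ • ζ) :
    ∀ η ξ : EuclideanSpace ℝ (Fin N),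
      G ‖η‖ + G ‖ξ‖ - 2 * G ‖(1 / 2 : ℝ) • (η + ξ)‖ ≤
        (1 / 2 : ℝ) * (inner ℝ (A η - A ξ) (η - ξ) : ℝ) := by
  intro η ξ
  have g0 : g 0 = 0 := by
    have := hg_odd 0
    simp at this
    linarith
  -- gradient inequality for G
  have hGint : ∀ s t : ℝ, g t * (s - t) ≤ G s - G t := by
    intro s t
    have hsub : G s - G t = ∫ u in t..s, g u := by
      rw [hG s, hG t,
        intervalIntegral.integral_interval_sub_left
          (hg_cont.intervalIntegrable 0 s) (hg_cont.intervalIntegrable 0 t)]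
    rcases le_total t s with h | h
    · have hmono : ∫ u in t..s, g t ≤ ∫ u in t..s, g u :=
        intervalIntegral.integral_mono_on h (intervalIntegrable_const)
          (hg_cont.intervalIntegrable t s) (fun u hu => hg_mono.monotone hu.1)
      rw [intervalIntegral.integral_const, smul_eq_mul] at hmono
      rw [hsub]; linarith [mul_comm (g t) (s - t)]
    · have hmono : ∫ u in s..t, g u ≤ ∫ u in s..t, g t :=
        intervalIntegral.integral_mono_on h (hg_cont.intervalIntegrable s t)
          (intervalIntegrable_const) (fun u hu => hg_mono.monotone hu.2)
      rw [intervalIntegral.integral_const, smul_eq_mul] at hmono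
      have hswap : ∫ u in t..s, g u = -∫ u in s..t, g u :=
        (intervalIntegral.integral_symm s t)
      rw [hsub, hswap]
      nlinarith
  -- key subgradient inequality
  have key : ∀ x y : EuclideanSpace ℝ (Fin N),
      (inner ℝ (A x) (y - x) : ℝ) ≤ G ‖y‖ - G ‖x‖ := by
    intro x y
    by_cases hx : x = 0
    · subst hx
      rw [hA0]
      simp only [inner_zero_left]
      have := hGint ‖y‖ 0
      rw [g0] at this
      simpa using this
    · rw [hA x hx]
      have hxpos : (0:ℝ) < ‖x‖ := norm_pos_iff.mpr hx
      have hgx : g ‖x‖ = a ‖x‖ * ‖x‖ := by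
        rw [hg_def ‖x‖, abs_of_pos hxpos]
      have hgx_nonneg : 0 ≤ g ‖x‖ := by
        have := hg_mono.monotone hxpos.le
        rw [g0] at this; exact this
      have ha_nonneg : 0 ≤ a ‖x‖ := by
        by_contra h
        push_neg at h
        nlinarith
      have hinner : (inner ℝ ((a ‖x‖) • x) (y - x) : ℝ)
          = a ‖x‖ * ((inner ℝ x y : ℝ) - ‖x‖^2) := by
        rw [real_inner_smul_left, inner_sub_right, real_inner_self_eq_norm_sq]
      rw [hinner]
      have hcs : (inner ℝ x y : ℝ) ≤ ‖x‖ * ‖y‖ := real_inner_le_norm x y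
      have h1 : a ‖x‖ * ((inner ℝ x y : ℝ) - ‖x‖^2) ≤ g ‖x‖ * (‖y‖ - ‖x‖) := by
        rw [hgx]
        nlinarith [mul_le_mul_of_nonneg_left hcs ha_nonneg]
      have h2 := hGint ‖y‖ ‖x‖
      linarith
  set m : EuclideanSpace ℝ (Fin N) := (1 / 2 : ℝ) • (η + ξ) with hm
  have h1 := key η m
  have h2 := key ξ m
  have e1 : m - η = (-(1/2) : ℝ) • (η - ξ) := by
    rw [hm]; module
  have e2 : m - ξ = ((1/2) : ℝ) • (η - ξ) := by
    rw [hm]; module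
  rw [e1, real_inner_smul_right] at h1
  rw [e2, real_inner_smul_right] at h2
  have hsplit : (inner ℝ (A η - A ξ) (η - ξ) : ℝ)
      = (inner ℝ (A η) (η - ξ) : ℝ) - (inner ℝ (A ξ) (η - ξ) : ℝ) :=
    inner_sub_left _ _ _
  rw [hsplit]
  linarith
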